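/- Let A ⊂ R^{d-1} be a bounded convex body and h : A → [0,∞) a concave function with sup_A h = 1. Then ∫_A h^3(x) dx ≥ (6/((d+1)(d+2))) ∫_A h(x) dx. -/

import Mathlib

open MeasureTheory

set_option maxHeartbeats 1000000 in
/-- For a bounded convex body `A ⊂ ℝ^{d-1}` and a concave `h : A → [0,∞)` with
`sup_A h = 1`, one has `∫_A h³ ≥ (6/((d+1)(d+2))) ∫_A h`. -/
theorem lower_thin_bound (d : ℕ) (hd : 2 ≤ d)
    (A : Set (EuclideanSpace ℝ (Fin (d - 1)))) (hconv : Convex ℝ A)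
    (hbd : Bornology.IsBounded A) (hpos : 0 < volume A)
    (h : EuclideanSpace ℝ (Fin (d - 1)) → ℝ) (hconc : ConcaveOn ℝ A h)
    (hnn : ∀ x ∈ A, 0 ≤ h x) (hsup : sSup (h '' A) = 1) :
    (6 / (((d : ℝ) + 1) * ((d : ℝ) + 2))) * (∫ x in A, h x) ≤ ∫ x in A, (h x) ^ 3 := by
  classical
  set B := interior A with hBdef
  have hBo : IsOpen B := isOpen_interior
  have hBm : MeasurableSet B := hBo.measurableSet
  have hBA : B ⊆ A := interior_subset
  -- `A` and its interior agree up to measure zero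
  have hfr : volume (frontier A) = 0 := hconv.addHaar_frontier volume
  have hsubfr : A \ B ⊆ frontier A := fun x hx => ⟨subset_closure hx.1, hx.2⟩
  have hd1 : volume (A \ B) = 0 := measure_mono_null hsubfr hfr
  have hd2 : volume (B \ A) = 0 := by
    have hBAe : B \ A = ∅ := Set.diff_eq_empty.2 hBA
    simp [hBAe]
  have hAB : A =ᵐ[volume] B := by
    rw [MeasureTheory.ae_eq_set]
    exact ⟨hd1, hd2⟩
  have hint_eq : ∀ f : EuclideanSpace ℝ (Fin (d - 1)) → ℝ,
      ∫ x in A, f x = ∫ x in B, f x := fun f => setIntegral_congr_set hAB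
  -- basic facts about `h`
  have hAne : A.Nonempty := nonempty_of_measure_ne_zero hpos.ne'
  have himne : (h '' A).Nonempty := hAne.image h
  have hbdd : BddAbove (h '' A) := by
    by_contra hc
    rw [Real.sSup_of_not_bddAbove hc] at hsup
    norm_num at hsup
  have hle1 : ∀ x ∈ A, h x ≤ 1 := by
    intro x hx
    rw [← hsup]
    exact le_csSup hbdd ⟨x, hx, rfl⟩
  have hvolB : volume B < ⊤ := (hbd.subset hBA).measure_lt_top
  have hcont : ContinuousOn h B := hconc.continuousOn_interior
  -- integrability of bounded continuous functions on B
  have hIB : ∀ g : EuclideanSpace ℝ (Fin (d - 1)) → ℝ, ContinuousOn g B →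
      (∀ x ∈ B, ‖g x‖ ≤ 1) → IntegrableOn g B := by
    intro g hg hb
    refine Integrable.mono' (g := fun _ => (1 : ℝ)) ?_ (hg.aestronglyMeasurable hBm) ?_
    · exact integrableOn_const hvolB.ne
    · exact (ae_restrict_iff' hBm).2 (Filter.Eventually.of_forall hb)
  have hbk : ∀ k : ℕ, ∀ x ∈ B, ‖h x ^ k‖ ≤ 1 := by
    intro k x hx
    have h0 := hnn x (hBA hx)
    have h1 := hle1 x (hBA hx)
    rw [Real.norm_eq_abs, abs_of_nonneg (pow_nonneg h0 k)]
    exact pow_le_one₀ h0 h1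
  have hJint : ∀ k : ℕ, IntegrableOn (fun x => h x ^ k) B :=
    fun k => hIB _ (hcont.pow k) (hbk k)
  set J : ℕ → ℝ := fun k => ∫ x in B, h x ^ k with hJ
  have hJnn : ∀ k, 0 ≤ J k :=
    fun k => setIntegral_nonneg hBm fun x hx => pow_nonneg (hnn x (hBA hx)) k
  have hfin : Module.finrank ℝ (EuclideanSpace ℝ (Fin (d - 1))) = d - 1 := finrank_euclideanSpace_fin
  -- the key scaling inequality
  have key : ∀ (k : ℕ) (p : EuclideanSpace ℝ (Fin (d - 1))), p ∈ A → ∀ s : ℝ,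
      s ∈ Set.Ioo (0 : ℝ) 1 →
      s ^ (d - 1) * ∫ x in B, (s * h x + (1 - s) * h p) ^ k ≤ J k := by
    intro k p hp s hs
    obtain ⟨hs0, hs1⟩ := hs
    have hs1' : (0 : ℝ) ≤ 1 - s := by linarith
    have hp0 := hnn p hp
    have hp1 := hle1 p hp
    set c : EuclideanSpace ℝ (Fin (d - 1)) := (1 - s) • p with hc
    set G : EuclideanSpace ℝ (Fin (d - 1)) → ℝ := B.indicator (fun y => h y ^ k) with hG
    have hGint : Integrable G := (hJint k).integrable_indicator hBm
    have hGnn : ∀ y, 0 ≤ G y := fun y =>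
      Set.indicator_nonneg (fun z hz => pow_nonneg (hnn z (hBA hz)) k) y
    have hpt : ∀ x, B.indicator (fun x => (s * h x + (1 - s) * h p) ^ k) x ≤ G (s • x + c) := by
      intro x
      by_cases hx : x ∈ B
      · have hmem : s • x + c ∈ B := by
          rw [hc]
          exact hconv.combo_interior_closure_mem_interior hx (subset_closure hp) hs0 hs1'
            (by ring)
        rw [Set.indicator_of_mem hx, hG, Set.indicator_of_mem hmem]
        have hcc : s * h x + (1 - s) * h p ≤ h (s • x + c) := by
          have := hconc.2 (hBA hx) hp hs0.le hs1' (by ring)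
          simpa [smul_eq_mul, hc] using this
        have hnn0 : 0 ≤ s * h x + (1 - s) * h p :=
          add_nonneg (mul_nonneg hs0.le (hnn x (hBA hx))) (mul_nonneg hs1' hp0)
        exact pow_le_pow_left₀ hnn0 hcc k
      · rw [Set.indicator_of_notMem hx]
        exact hGnn _
    have hLint : Integrable (B.indicator (fun x => (s * h x + (1 - s) * h p) ^ k)) := by
      refine IntegrableOn.integrable_indicator ?_ hBm
      refine hIB _ (((continuousOn_const.mul hcont).add continuousOn_const).pow k) ?_
      intro x hx
      have h0 := hnn x (hBA hx)
      have h1 := hle1 x (hBA hx)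
      have hnn0 : 0 ≤ s * h x + (1 - s) * h p :=
        add_nonneg (mul_nonneg hs0.le h0) (mul_nonneg hs1' hp0)
      rw [Real.norm_eq_abs, abs_of_nonneg (pow_nonneg hnn0 k)]
      refine pow_le_one₀ hnn0 ?_
      nlinarith
    have hRint : Integrable (fun x => G (s • x + c)) := by
      have h1 : Integrable (fun y => G (y + c)) := hGint.comp_add_right c
      exact h1.comp_smul hs0.ne'
    have hcv : ∫ x, G (s • x + c) = (s ^ (d - 1))⁻¹ * ∫ x, G x := by
      have h1 : (fun x => G (s • x + c)) = fun x => (fun y => G (y + c)) (s • x) := rfl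
      rw [h1, Measure.integral_comp_smul volume (fun y => G (y + c)) s, hfin,
        integral_add_right_eq_self G c, abs_of_nonneg (by positivity), smul_eq_mul]
    have hmono := integral_mono hLint hRint hpt
    rw [integral_indicator hBm, hcv] at hmono
    have hGJ : ∫ x, G x = J k := integral_indicator hBm
    calc s ^ (d - 1) * ∫ x in B, (s * h x + (1 - s) * h p) ^ k
        ≤ s ^ (d - 1) * ((s ^ (d - 1))⁻¹ * J k) := by
          rw [← hGJ]
          exact mul_le_mul_of_nonneg_left hmono (by positivity)
      _ = J k := by
          field_simp
  -- extract the two moment inequalities via `s → 1`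
  have step : ∀ p : EuclideanSpace ℝ (Fin (d - 1)), p ∈ A →
      2 * h p * J 1 ≤ (((d - 1 : ℕ) : ℝ) + 2) * J 2 ∧ 3 * h p * J 2 ≤ (((d - 1 : ℕ) : ℝ) + 3) * J 3 := by
    intro p hp
    have hp0 := hnn p hp
    have hp1 := hle1 p hp
    have hIg : ∀ s : ℝ, s ∈ Set.Ioo (0 : ℝ) 1 → ∀ k : ℕ,
        IntegrableOn (fun x => (s * h x + (1 - s) * h p) ^ k) B := by
      intro s hs k
      refine hIB _ (((continuousOn_const.mul hcont).add continuousOn_const).pow k) ?_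
      intro x hx
      have h0 := hnn x (hBA hx)
      have h1 := hle1 x (hBA hx)
      obtain ⟨hs0, hs1⟩ := hs
      have hnn0 : 0 ≤ s * h x + (1 - s) * h p :=
        add_nonneg (mul_nonneg hs0.le h0) (mul_nonneg (by linarith) hp0)
      rw [Real.norm_eq_abs, abs_of_nonneg (pow_nonneg hnn0 k)]
      refine pow_le_one₀ hnn0 ?_
      nlinarith
    constructor
    · -- k = 2
      have h2 : ∀ s : ℝ, s ∈ Set.Ioo (0 : ℝ) 1 →
          2 * s ^ (d - 1 + 1) * h p * J 1 ≤ (((d - 1 : ℕ) : ℝ) + 2) * J 2 := by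
        intro s hs
        obtain ⟨hs0, hs1⟩ := hs
        have hs1' : (0 : ℝ) ≤ 1 - s := by linarith
        have hkey := key 2 p hp s ⟨hs0, hs1⟩
        have hlow : s ^ 2 * J 2 + (2 * s * (1 - s) * h p) * J 1
            ≤ ∫ x in B, (s * h x + (1 - s) * h p) ^ 2 := by
          have heq : s ^ 2 * J 2 + (2 * s * (1 - s) * h p) * J 1
              = ∫ x in B, (s ^ 2 * h x ^ 2 + (2 * s * (1 - s) * h p) * h x ^ 1) := by
            rw [integral_add ((hJint 2).const_mul _) ((hJint 1).const_mul _),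
              integral_const_mul, integral_const_mul]
          rw [heq]
          refine setIntegral_mono_on
            (((hJint 2).const_mul _).add ((hJint 1).const_mul _))
            (hIg s ⟨hs0, hs1⟩ 2) hBm ?_
          intro x hx
          have h0 := hnn x (hBA hx)
          nlinarith [sq_nonneg ((1 - s) * h p)]
        have hchain : s ^ (d - 1) * (s ^ 2 * J 2 + (2 * s * (1 - s) * h p) * J 1) ≤ J 2 :=
          le_trans (mul_le_mul_of_nonneg_left hlow (by positivity)) hkey
        have hbern : 1 + (((d - 1 : ℕ) : ℝ) + 2) * (s - 1) ≤ s ^ (d - 1 + 2) := by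
          have := one_add_mul_le_pow (show (-2 : ℝ) ≤ s - 1 by linarith) (d - 1 + 2)
          have hss : (1 : ℝ) + (s - 1) = s := by ring
          rw [hss] at this
          convert this using 2
          · rfl
          push_cast
          ring
        have hexp : s ^ (d - 1) * s ^ 2 = s ^ (d - 1 + 2) := by
          rw [← pow_add]
        have hexp1 : s ^ (d - 1) * s = s ^ (d - 1 + 1) := by
          rw [← pow_succ]
        have hmul : (2 * s ^ (d - 1 + 1) * h p * J 1) * (1 - s)
            ≤ ((((d - 1 : ℕ) : ℝ) + 2) * J 2) * (1 - s) := by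
          have e1 : (2 * s ^ (d - 1 + 1) * h p * J 1) * (1 - s)
              = s ^ (d - 1) * ((2 * s * (1 - s) * h p) * J 1) := by
            rw [← hexp1]; ring
          have e2 : (((d - 1 : ℕ) : ℝ) + 2) * (1 - s) * J 2 = (1 - (1 + (((d - 1 : ℕ) : ℝ) + 2) * (s - 1))) * J 2 := by
            ring
          have e3 : (1 - s ^ (d - 1 + 2)) * J 2 ≤ (((d - 1 : ℕ) : ℝ) + 2) * (1 - s) * J 2 := by
            apply mul_le_mul_of_nonneg_right _ (hJnn 2)
            linarith
          have e4 : s ^ (d - 1) * ((2 * s * (1 - s) * h p) * J 1) ≤ (1 - s ^ (d - 1 + 2)) * J 2 := by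
            have hdis : s ^ (d - 1) * (s ^ 2 * J 2 + (2 * s * (1 - s) * h p) * J 1)
                = s ^ (d - 1 + 2) * J 2 + s ^ (d - 1) * ((2 * s * (1 - s) * h p) * J 1) := by
              rw [← hexp]; ring
            rw [hdis] at hchain
            linarith
          calc (2 * s ^ (d - 1 + 1) * h p * J 1) * (1 - s)
              = s ^ (d - 1) * ((2 * s * (1 - s) * h p) * J 1) := e1
            _ ≤ (1 - s ^ (d - 1 + 2)) * J 2 := e4
            _ ≤ (((d - 1 : ℕ) : ℝ) + 2) * (1 - s) * J 2 := e3
            _ = ((((d - 1 : ℕ) : ℝ) + 2) * J 2) * (1 - s) := by ring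
        exact le_of_mul_le_mul_right hmul (by linarith)
      -- limit s → 1⁻
      have ht : Filter.Tendsto (fun s : ℝ => 2 * s ^ (d - 1 + 1) * h p * J 1)
          (nhdsWithin 1 (Set.Iio 1)) (nhds (2 * 1 ^ (d - 1 + 1) * h p * J 1)) := by
        apply Filter.Tendsto.mono_left _ nhdsWithin_le_nhds
        exact Continuous.tendsto
          (((continuous_const.mul (continuous_pow _)).mul continuous_const).mul
            continuous_const) 1
      have := le_of_tendsto ht (Filter.eventually_of_mem
        (Ioo_mem_nhdsLT_of_mem ⟨zero_lt_one, le_rfl⟩) h2)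
      simpa using this
    · -- k = 3
      have h3 : ∀ s : ℝ, s ∈ Set.Ioo (0 : ℝ) 1 →
          3 * s ^ (d - 1 + 2) * h p * J 2 ≤ (((d - 1 : ℕ) : ℝ) + 3) * J 3 := by
        intro s hs
        obtain ⟨hs0, hs1⟩ := hs
        have hs1' : (0 : ℝ) ≤ 1 - s := by linarith
        have hkey := key 3 p hp s ⟨hs0, hs1⟩
        have hlow : s ^ 3 * J 3 + (3 * s ^ 2 * (1 - s) * h p) * J 2
            ≤ ∫ x in B, (s * h x + (1 - s) * h p) ^ 3 := by
          have heq : s ^ 3 * J 3 + (3 * s ^ 2 * (1 - s) * h p) * J 2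
              = ∫ x in B, (s ^ 3 * h x ^ 3 + (3 * s ^ 2 * (1 - s) * h p) * h x ^ 2) := by
            rw [integral_add ((hJint 3).const_mul _) ((hJint 2).const_mul _),
              integral_const_mul, integral_const_mul]
          rw [heq]
          refine setIntegral_mono_on
            (((hJint 3).const_mul _).add ((hJint 2).const_mul _))
            (hIg s ⟨hs0, hs1⟩ 3) hBm ?_
          intro x hx
          have h0 := hnn x (hBA hx)
          have hident : (s * h x + (1 - s) * h p) ^ 3
              = s ^ 3 * h x ^ 3 + 3 * s ^ 2 * (1 - s) * h p * h x ^ 2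
                + 3 * s * (1 - s) ^ 2 * h p ^ 2 * h x + (1 - s) ^ 3 * h p ^ 3 := by
            ring
          nlinarith [mul_nonneg (mul_nonneg (mul_nonneg
              (mul_nonneg (by norm_num : (0:ℝ) ≤ 3) hs0.le) (sq_nonneg (1 - s)))
              (sq_nonneg (h p))) h0,
            mul_nonneg (pow_nonneg hs1' 3) (pow_nonneg hp0 3)]
        have hchain : s ^ (d - 1) * (s ^ 3 * J 3 + (3 * s ^ 2 * (1 - s) * h p) * J 2) ≤ J 3 :=
          le_trans (mul_le_mul_of_nonneg_left hlow (by positivity)) hkey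
        have hbern : 1 + (((d - 1 : ℕ) : ℝ) + 3) * (s - 1) ≤ s ^ (d - 1 + 3) := by
          have := one_add_mul_le_pow (show (-2 : ℝ) ≤ s - 1 by linarith) (d - 1 + 3)
          have hss : (1 : ℝ) + (s - 1) = s := by ring
          rw [hss] at this
          convert this using 2
          · rfl
          push_cast
          ring
        have hexp : s ^ (d - 1) * s ^ 3 = s ^ (d - 1 + 3) := by rw [← pow_add]
        have hexp2 : s ^ (d - 1) * s ^ 2 = s ^ (d - 1 + 2) := by rw [← pow_add]
        have hmul : (3 * s ^ (d - 1 + 2) * h p * J 2) * (1 - s)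
            ≤ ((((d - 1 : ℕ) : ℝ) + 3) * J 3) * (1 - s) := by
          have e1 : (3 * s ^ (d - 1 + 2) * h p * J 2) * (1 - s)
              = s ^ (d - 1) * ((3 * s ^ 2 * (1 - s) * h p) * J 2) := by
            rw [← hexp2]; ring
          have e3 : (1 - s ^ (d - 1 + 3)) * J 3 ≤ (((d - 1 : ℕ) : ℝ) + 3) * (1 - s) * J 3 := by
            apply mul_le_mul_of_nonneg_right _ (hJnn 3)
            linarith
          have e4 : s ^ (d - 1) * ((3 * s ^ 2 * (1 - s) * h p) * J 2) ≤ (1 - s ^ (d - 1 + 3)) * J 3 := by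
            have hdis : s ^ (d - 1) * (s ^ 3 * J 3 + (3 * s ^ 2 * (1 - s) * h p) * J 2)
                = s ^ (d - 1 + 3) * J 3 + s ^ (d - 1) * ((3 * s ^ 2 * (1 - s) * h p) * J 2) := by
              rw [← hexp]; ring
            rw [hdis] at hchain
            linarith
          calc (3 * s ^ (d - 1 + 2) * h p * J 2) * (1 - s)
              = s ^ (d - 1) * ((3 * s ^ 2 * (1 - s) * h p) * J 2) := e1
            _ ≤ (1 - s ^ (d - 1 + 3)) * J 3 := e4
            _ ≤ (((d - 1 : ℕ) : ℝ) + 3) * (1 - s) * J 3 := e3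
            _ = ((((d - 1 : ℕ) : ℝ) + 3) * J 3) * (1 - s) := by ring
        exact le_of_mul_le_mul_right hmul (by linarith)
      have ht : Filter.Tendsto (fun s : ℝ => 3 * s ^ (d - 1 + 2) * h p * J 2)
          (nhdsWithin 1 (Set.Iio 1)) (nhds (3 * 1 ^ (d - 1 + 2) * h p * J 2)) := by
        apply Filter.Tendsto.mono_left _ nhdsWithin_le_nhds
        exact Continuous.tendsto
          (((continuous_const.mul (continuous_pow _)).mul continuous_const).mul
            continuous_const) 1
      have := le_of_tendsto ht (Filter.eventually_of_mem
        (Ioo_mem_nhdsLT_of_mem ⟨zero_lt_one, le_rfl⟩) h3)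
      simpa using this
  -- combine, taking points with h p close to 1
  have hfinal : ∀ c : ℝ, c ∈ Set.Ioo (0 : ℝ) 1 →
      6 * c ^ 2 * J 1 ≤ ((((d - 1 : ℕ) : ℝ) + 2) * (((d - 1 : ℕ) : ℝ) + 3)) * J 3 := by
    intro c hc
    obtain ⟨y, ⟨p, hp, rfl⟩, hyc⟩ := exists_lt_of_lt_csSup himne (by rw [hsup]; exact hc.2)
    obtain ⟨e2, e3⟩ := step p hp
    have hp0 := hnn p hp
    have hc0 : (0 : ℝ) ≤ c := hc.1.le
    have t1 : 6 * c ^ 2 * J 1 ≤ 6 * h p ^ 2 * J 1 := by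
      have h2 : c ^ 2 ≤ h p ^ 2 := by nlinarith
      nlinarith [hJnn 1]
    have t2 : 6 * h p ^ 2 * J 1 ≤ 3 * h p * ((((d - 1 : ℕ) : ℝ) + 2) * J 2) := by
      have := mul_le_mul_of_nonneg_left e2 (by positivity : (0:ℝ) ≤ 3 * h p)
      nlinarith [this]
    have t3 : 3 * h p * ((((d - 1 : ℕ) : ℝ) + 2) * J 2) ≤ ((((d - 1 : ℕ) : ℝ) + 2) * (((d - 1 : ℕ) : ℝ) + 3)) * J 3 := by
      have := mul_le_mul_of_nonneg_left e3 (by positivity : (0:ℝ) ≤ ((d - 1 : ℕ) : ℝ) + 2)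
      nlinarith [this]
    linarith
  have hmain : 6 * J 1 ≤ ((((d - 1 : ℕ) : ℝ) + 2) * (((d - 1 : ℕ) : ℝ) + 3)) * J 3 := by
    have ht : Filter.Tendsto (fun c : ℝ => 6 * c ^ 2 * J 1)
        (nhdsWithin 1 (Set.Iio 1)) (nhds (6 * 1 ^ 2 * J 1)) := by
      apply Filter.Tendsto.mono_left _ nhdsWithin_le_nhds
      exact Continuous.tendsto
        ((continuous_const.mul (continuous_pow 2)).mul continuous_const) 1
    have := le_of_tendsto ht (Filter.eventually_of_mem
      (Ioo_mem_nhdsLT_of_mem ⟨zero_lt_one, le_rfl⟩) hfinal)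
    simpa using this
  -- wrap up
  have hc2 : (((d - 1 : ℕ) : ℝ) + 2) = (d : ℝ) + 1 := by
    have : ((d - 1 : ℕ) : ℝ) = (d : ℝ) - 1 := by
      rw [Nat.cast_sub (by omega : 1 ≤ d)]
      norm_num
    rw [this]; ring
  have hc3 : (((d - 1 : ℕ) : ℝ) + 3) = (d : ℝ) + 2 := by
    have : ((d - 1 : ℕ) : ℝ) = (d : ℝ) - 1 := by
      rw [Nat.cast_sub (by omega : 1 ≤ d)]
      norm_num
    rw [this]; ring
  rw [hint_eq (fun x => h x), hint_eq (fun x => h x ^ 3)]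
  have hJ1 : (∫ x in B, h x) = J 1 := by
    simp only [hJ, pow_one]
  rw [hJ1]
  have hpos' : (0 : ℝ) < ((d : ℝ) + 1) * ((d : ℝ) + 2) := by positivity
  rw [div_mul_eq_mul_div, div_le_iff₀ hpos']
  calc 6 * J 1 ≤ ((((d - 1 : ℕ) : ℝ) + 2) * (((d - 1 : ℕ) : ℝ) + 3)) * J 3 := hmain
    _ = J 3 * (((d : ℝ) + 1) * ((d : ℝ) + 2)) := by rw [hc2, hc3]; ring
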